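/- Let Λ be the Lobachevsky function, and for n ≥ 5 set θ_n = π/2 − arccos(1/(2·cos(π/n))) and vol(L(n)) = (n/2)·(2Λ(θ_n) + Λ(θ_n + π/n) + Λ(θ_n − π/n) − Λ(2θ_n − π/2)). Then vol(L(n))/(4n) converges to (5/8)·Λ(π/6) as n → ∞; that is, the normalized volume ω(L(n)) = vol(L(n))/ver(L(n)) of the right-angled hyperbolic Löbell polyhedron L(n), which has 4n vertices, tends to 5v_tet/16. -/

import Mathlib

open Real Filter

/-- The Lobachevsky function `Λ(θ) = −∫₀^θ log|2 sin t| dt`. -/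
noncomputable def lobachevsky (θ : ℝ) : ℝ :=
  -∫ t in (0:ℝ)..θ, Real.log |2 * Real.sin t|

open MeasureTheory Set intervalIntegral

-- integrability of f on [0, π/2]
lemma lob_intInt_pos : IntervalIntegrable (fun t => Real.log |2 * Real.sin t|)
    volume 0 (π/2) := by
  rw [intervalIntegrable_iff_integrableOn_Ioc_of_le (by positivity)]
  have hg : IntegrableOn (fun t : ℝ => 2 * t ^ (-(1:ℝ)/2) + 2) (Ioc 0 (π/2)) volume := by
    have h1 : IntervalIntegrable (fun t : ℝ => t ^ (-(1:ℝ)/2)) volume 0 (π/2) :=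
      intervalIntegrable_rpow' (by norm_num)
    have := (h1.const_mul 2).add (_root_.intervalIntegrable_const (c := (2:ℝ)))
    rwa [intervalIntegrable_iff_integrableOn_Ioc_of_le (by positivity)] at this
  refine Integrable.mono' hg ?_ ?_
  · exact ((Real.measurable_log.comp ((measurable_const.mul measurable_sin).abs)).aestronglyMeasurable).restrict
  · filter_upwards [ae_restrict_mem measurableSet_Ioc] with t ht
    have ht0 : 0 < t := ht.1
    have ht2 : t ≤ π/2 := ht.2
    have hs0 : 0 < Real.sin t := Real.sin_pos_of_pos_of_lt_pi ht0 (lt_of_le_of_lt ht2 (by linarith [Real.pi_pos]))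
    have habs : |2 * Real.sin t| = 2 * Real.sin t := abs_of_pos (by linarith)
    rw [Real.norm_eq_abs, habs]
    have hub : Real.log (2 * Real.sin t) ≤ Real.log (2 * t) := by
      apply Real.log_le_log (by linarith)
      have := Real.sin_lt ht0
      linarith
    have hlb : Real.log ((4/π) * t) ≤ Real.log (2 * Real.sin t) := by
      apply Real.log_le_log (by positivity)
      have h := Real.mul_le_sin ht0.le ht2
      have : 4/π * t = 2 * (2/π * t) := by ring
      linarith
    -- |log(2 sin t)| ≤ |log t| + 2
    have hlogt2 : Real.log (2*t) = Real.log 2 + Real.log t := by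
      rw [Real.log_mul (by norm_num) ht0.ne']
    have hlogt4 : Real.log ((4/π)*t) = Real.log (4/π) + Real.log t := by
      rw [Real.log_mul (by positivity) ht0.ne']
    have hl2 : Real.log 2 ≤ 1 := by
      have := Real.log_le_sub_one_of_pos (x := 2) (by norm_num); linarith
    have hl4 : -1 ≤ Real.log (4/π) := by
      have h4 : (1:ℝ) ≤ 4/π := by
        rw [le_div_iff₀ Real.pi_pos]; linarith [Real.pi_le_four]
      have := Real.log_nonneg h4; linarith
    have key : |Real.log (2 * Real.sin t)| ≤ |Real.log t| + 1 := by
      rw [abs_le]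
      constructor
      · have : -|Real.log t| ≤ Real.log t := neg_abs_le _
        rw [hlogt4] at hlb; linarith
      · have : Real.log t ≤ |Real.log t| := le_abs_self _
        rw [hlogt2] at hub; linarith
    -- |log t| ≤ 2 t^{-1/2} + 1
    have hlt : |Real.log t| ≤ 2 * t ^ (-(1:ℝ)/2) + 1 := by
      rcases le_or_gt t 1 with h1 | h1
      · have : |Real.log t| = -Real.log t := abs_of_nonpos (Real.log_nonpos ht0.le h1)
        rw [this]
        have hinv : -Real.log t = Real.log t⁻¹ := (Real.log_inv t).symm
        have hsq : Real.log t⁻¹ = 2 * Real.log (t⁻¹ ^ ((1:ℝ)/2)) := by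
          rw [Real.log_rpow (by positivity)]; ring
        have hle : Real.log (t⁻¹ ^ ((1:ℝ)/2)) ≤ t⁻¹ ^ ((1:ℝ)/2) := by
          have := Real.log_le_sub_one_of_pos (x := t⁻¹ ^ ((1:ℝ)/2)) (by positivity)
          linarith
        have hrw : t⁻¹ ^ ((1:ℝ)/2) = t ^ (-(1:ℝ)/2) := by
          rw [Real.inv_rpow ht0.le, ← Real.rpow_neg ht0.le]; norm_num
        nlinarith [Real.rpow_nonneg ht0.le (-(1:ℝ)/2), hinv, hsq, hrw]
      · have h0 : 0 ≤ Real.log t := Real.log_nonneg h1.le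
        have : Real.log t ≤ t - 1 := Real.log_le_sub_one_of_pos ht0
        have hpi : t ≤ 2 := by linarith [Real.pi_le_four]
        have : |Real.log t| ≤ 1 := by rw [abs_of_nonneg h0]; linarith
        nlinarith [Real.rpow_nonneg ht0.le (-(1:ℝ)/2)]
    calc |Real.log (2 * Real.sin t)| ≤ |Real.log t| + 1 := key
      _ ≤ 2 * t ^ (-(1:ℝ)/2) + 2 := by linarith

lemma lob_even : ∀ t : ℝ, Real.log |2 * Real.sin (-t)| = Real.log |2 * Real.sin t| := by
  intro t; rw [Real.sin_neg]; rw [show (2:ℝ) * -Real.sin t = -(2 * Real.sin t) by ring, abs_neg]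

lemma lob_intInt : IntervalIntegrable (fun t => Real.log |2 * Real.sin t|)
    volume (-(π/2)) (π/2) := by
  have hpos := lob_intInt_pos
  have hneg : IntervalIntegrable (fun t => Real.log |2 * Real.sin t|) volume (-(π/2)) 0 := by
    rw [IntervalIntegrable.iff_comp_neg]
    simp only [lob_even, neg_neg, neg_zero]
    exact hpos.symm
  exact hneg.trans hpos

lemma lob_continuousOn : ContinuousOn lobachevsky (Set.uIcc (-(π/2)) (π/2)) := by
  have := intervalIntegral.continuousOn_primitive_interval'
    (a := 0) lob_intInt (by
      constructor
      · simp only [min_le_iff]; left; linarith [Real.pi_pos]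
      · simp only [le_max_iff]; right; linarith [Real.pi_pos])
  exact this.neg

lemma lob_continuousAt {x : ℝ} (hx : |x| < π/2) : ContinuousAt lobachevsky x := by
  refine (lob_continuousOn.continuousAt ?_)
  rw [Set.uIcc_of_le (by linarith [Real.pi_pos])]
  apply Icc_mem_nhds
  · cases abs_lt.1 hx; linarith
  · exact (le_abs_self x).trans_lt hx

lemma lob_odd (θ : ℝ) : lobachevsky (-θ) = -lobachevsky θ := by
  unfold lobachevsky
  rw [neg_neg]
  have h : (∫ t in (0:ℝ)..θ, Real.log |2 * Real.sin (-t)|) = ∫ t in (-θ)..(0:ℝ), Real.log |2 * Real.sin t| := by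
    simpa using intervalIntegral.integral_comp_neg (a := (0:ℝ)) (b := θ)
      (fun t => Real.log |2 * Real.sin t|)
  simp only [lob_even] at h
  rw [intervalIntegral.integral_symm (-θ) 0, ← h, neg_neg]


/-- The angle parameter `θ_n = π/2 − arccos(1/(2cos(π/n)))` of the Löbell
polyhedron `L(n)`. -/
noncomputable def lobellAngle (n : ℕ) : ℝ :=
  π / 2 - Real.arccos (1 / (2 * Real.cos (π / (n : ℝ))))

/-- The volume of the right-angled hyperbolic Löbell polyhedron `L(n)`,
formula (5) of the paper. -/
noncomputable def lobellVolume (n : ℕ) : ℝ :=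
  ((n : ℝ) / 2) * (2 * lobachevsky (lobellAngle n)
    + lobachevsky (lobellAngle n + π / (n : ℝ))
    + lobachevsky (lobellAngle n - π / (n : ℝ))
    - lobachevsky (2 * lobellAngle n - π / 2))

/-- The normalized volume `ω(L(n)) = vol(L(n))/(4n)` of the Löbell polyhedron
tends to `5v_tet/16 = (5/8)Λ(π/6)` as `n → ∞`. -/
theorem lobell_normalized_volume_tendsto :
    Tendsto (fun n : ℕ => lobellVolume n / (4 * (n : ℝ)))
      atTop (nhds ((5 / 8) * lobachevsky (π / 6))) := by
  have pi_pos := Real.pi_pos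
  have h6 : |π/6| < π/2 := by rw [abs_of_pos (by positivity)]; linarith
  have h6' : |(-(π/6))| < π/2 := by rw [abs_neg]; exact h6
  have hπn : Tendsto (fun n : ℕ => π / (n:ℝ)) atTop (nhds 0) :=
    tendsto_const_div_atTop_nhds_zero_nat π
  have hcos : Tendsto (fun n : ℕ => Real.cos (π/(n:ℝ))) atTop (nhds 1) := by
    have := (Real.continuous_cos.tendsto 0).comp hπn
    simpa [Function.comp_def] using this
  have h2 : Tendsto (fun n : ℕ => 2*Real.cos (π/(n:ℝ))) atTop (nhds 2) := by
    simpa using hcos.const_mul 2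
  have harg : Tendsto (fun n : ℕ => (2*Real.cos (π/(n:ℝ)))⁻¹) atTop (nhds 2⁻¹) :=
    h2.inv₀ (by norm_num)
  have harccos12 : Real.arccos 2⁻¹ = π/3 := by
    rw [show (2:ℝ)⁻¹ = 1/2 by norm_num, ← Real.cos_pi_div_three]
    exact Real.arccos_cos (by positivity) (by linarith)
  have hθ : Tendsto lobellAngle atTop (nhds (π/6)) := by
    have h := (tendsto_const_nhds (α := ℕ) (x := π/2)).sub
      ((Real.continuous_arccos.tendsto 2⁻¹).comp harg)
    rw [harccos12, show π/2 - π/3 = π/6 by ring] at h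
    unfold lobellAngle
    simpa [Function.comp, one_div] using h
  have hθp : Tendsto (fun n : ℕ => lobellAngle n + π/(n:ℝ)) atTop (nhds (π/6)) := by
    simpa using hθ.add hπn
  have hθm : Tendsto (fun n : ℕ => lobellAngle n - π/(n:ℝ)) atTop (nhds (π/6)) := by
    simpa using hθ.sub hπn
  have hθ2 : Tendsto (fun n : ℕ => 2*lobellAngle n - π/2) atTop (nhds (-(π/6))) := by
    have := (hθ.const_mul 2).sub_const (π/2)
    have heq : 2*(π/6) - π/2 = -(π/6) := by ring
    simpa [heq] using this
  have l1 : Tendsto (fun n : ℕ => lobachevsky (lobellAngle n)) atTop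
      (nhds (lobachevsky (π/6))) := ((lob_continuousAt h6).tendsto).comp hθ
  have l2 : Tendsto (fun n : ℕ => lobachevsky (lobellAngle n + π/(n:ℝ))) atTop
      (nhds (lobachevsky (π/6))) := ((lob_continuousAt h6).tendsto).comp hθp
  have l3 : Tendsto (fun n : ℕ => lobachevsky (lobellAngle n - π/(n:ℝ))) atTop
      (nhds (lobachevsky (π/6))) := ((lob_continuousAt h6).tendsto).comp hθm
  have l4 : Tendsto (fun n : ℕ => lobachevsky (2*lobellAngle n - π/2)) atTop
      (nhds (lobachevsky (-(π/6)))) := ((lob_continuousAt h6').tendsto).comp hθ2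
  have main : Tendsto (fun n : ℕ => (1/8) * (2 * lobachevsky (lobellAngle n)
      + lobachevsky (lobellAngle n + π/(n:ℝ))
      + lobachevsky (lobellAngle n - π/(n:ℝ))
      - lobachevsky (2*lobellAngle n - π/2))) atTop
      (nhds ((1/8) * (2 * lobachevsky (π/6) + lobachevsky (π/6) + lobachevsky (π/6)
        - lobachevsky (-(π/6))))) :=
    ((((l1.const_mul 2).add l2).add l3).sub l4).const_mul (1/8)
  rw [lob_odd] at main
  have hval : (1/8 : ℝ) * (2 * lobachevsky (π/6) + lobachevsky (π/6) + lobachevsky (π/6)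
      - -lobachevsky (π/6)) = (5/8) * lobachevsky (π/6) := by ring
  rw [hval] at main
  refine main.congr' ?_
  filter_upwards [eventually_ge_atTop 1] with n hn
  have hn0 : (n : ℝ) ≠ 0 := by exact_mod_cast Nat.one_le_iff_ne_zero.mp hn
  unfold lobellVolume
  field_simp
  ring
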